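/- Let K be a convex body in ℝⁿ with C² boundary and strictly positive curvature, containing the origin in its interior, and suppose α δ ≤ D²(‖x‖²_K/2) ≤ β δ for some 0 < α ≤ β and all x ∈ ∂K. Then (1/√β) B₂ⁿ ⊂ K ⊂ (1/√α) B₂ⁿ, and α δ_{∂K} ≤ II_{∂K}(x)/⟨x, ν_K(x)⟩ ≤ β δ_{∂K} for all x ∈ ∂K, where δ_{∂K} is the induced Euclidean metric on ∂K. -/

import Mathlib

open scoped RealInnerProductSpace ENNReal NNReal Pointwise
open MeasureTheory Metric Set

noncomputable section

/-- `Euc n` is Euclidean space `ℝⁿ`. -/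
abbrev Euc (n : ℕ) := EuclideanSpace ℝ (Fin n)

/-- A convex body in `ℝⁿ` (with the origin as an interior point). -/
def IsConvexBody (n : ℕ) (K : Set (Euc n)) : Prop :=
  IsCompact K ∧ Convex ℝ K ∧ (0 : Euc n) ∈ interior K

/-- An origin-symmetric set. -/
def IsOriginSymmetric {n : ℕ} (K : Set (Euc n)) : Prop := ∀ x ∈ K, -x ∈ K

/-- The support function `h_K (x) = max_{y ∈ K} ⟨x, y⟩`. -/
def suppFn {n : ℕ} (K : Set (Euc n)) (x : Euc n) : ℝ :=
  sSup ((fun y => ⟪x, y⟫) '' K)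

/-- Half of the squared Minkowski gauge, `‖x‖_K² / 2`. -/
def halfGaugeSq {n : ℕ} (K : Set (Euc n)) (x : Euc n) : ℝ := gauge K x ^ 2 / 2

/-- The Euclidean Hessian `D²f(x)(u,v)`. -/
def hess {n : ℕ} (f : Euc n → ℝ) (x u v : Euc n) : ℝ :=
  fderiv ℝ (fun y => fderiv ℝ f y v) x u

/-- The Gauss map (outer unit normal) of `∂K`, extended `0`-homogeneously to `ℝⁿ \ {0}`:
for a smooth convex body containing the origin in its interior, the outer unit normal at
`x ∈ ∂K` is the normalized gradient of the Minkowski gauge. -/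
def gaussMap {n : ℕ} (K : Set (Euc n)) (x : Euc n) : Euc n :=
  ‖gradient (gauge K) x‖⁻¹ • gradient (gauge K) x

/-- The second fundamental form `II_{∂K}(x)(u,v)` of `∂K` (for tangent vectors `u, v`),
via the Weingarten map, i.e. the differential of the Gauss map. -/
def secondFF {n : ℕ} (K : Set (Euc n)) (x u v : Euc n) : ℝ :=
  ⟪fderiv ℝ (gaussMap K) x u, v⟫

/-- `K ∈ 𝒦²₊`: a convex body with `C²`-smooth boundary (equivalently, `‖·‖_K²` is `C²` away
from the origin) and strictly positive curvature (positive-definite second fundamental form). -/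
def IsC2PlusBody (n : ℕ) (K : Set (Euc n)) : Prop :=
  IsConvexBody n K ∧ ContDiffOn ℝ 2 (halfGaugeSq K) {(0 : Euc n)}ᶜ ∧
  ∀ x ∈ frontier K, ∀ u : Euc n, ⟪gaussMap K x, u⟫ = 0 → u ≠ 0 → 0 < secondFF K x u u

/-- `K ∈ 𝒦^{2,r}₊`: as `IsC2PlusBody`, with second derivatives of `‖·‖_K²/2` moreover
`r`-Hölder continuous on the unit sphere. -/
def IsC2HolderBody (n : ℕ) (r : ℝ) (K : Set (Euc n)) : Prop :=
  IsC2PlusBody n K ∧ ∃ C : ℝ, ∀ x ∈ sphere (0 : Euc n) 1, ∀ y ∈ sphere (0 : Euc n) 1,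
    ‖fderiv ℝ (fun z => fderiv ℝ (halfGaugeSq K) z) x
      - fderiv ℝ (fun z => fderiv ℝ (halfGaugeSq K) z) y‖ ≤ C * ‖x - y‖ ^ r

/-- `K ∈ 𝒦^{2,α}₊` for some Hölder exponent `α ∈ (0,1]`. -/
def IsC2AlphaBody (n : ℕ) (K : Set (Euc n)) : Prop :=
  ∃ r : ℝ, 0 < r ∧ r ≤ 1 ∧ IsC2HolderBody n r K

/-- `K ∈ 𝒦^∞₊`: a `C^∞`-smooth convex body with strictly positive curvature. -/
def IsSmoothBody (n : ℕ) (K : Set (Euc n)) : Prop :=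
  IsConvexBody n K ∧ ContDiffOn ℝ (⊤ : ℕ∞) (halfGaugeSq K) {(0 : Euc n)}ᶜ ∧
  ∀ x ∈ frontier K, ∀ u : Euc n, ⟪gaussMap K x, u⟫ = 0 → u ≠ 0 → 0 < secondFF K x u u

/-- The surface-area measure `S_K` of `K`, as a measure on `ℝⁿ` concentrated on `S^{n-1}`:
the push-forward of the `(n-1)`-dimensional Hausdorff measure on `∂K` via the Gauss map. -/
def surfaceMeasure (n : ℕ) (K : Set (Euc n)) : Measure (Euc n) :=
  Measure.map (gaussMap K) ((μH[(n : ℝ) - 1] : Measure (Euc n)).restrict (frontier K))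

/-- The `L^p` surface-area measure `S_p K = h_K^{1-p} S_K`. -/
def lpSurfaceMeasure (n : ℕ) (p : ℝ) (K : Set (Euc n)) : Measure (Euc n) :=
  (surfaceMeasure n K).withDensity fun θ => ENNReal.ofReal (suppFn K θ ^ (1 - p))

/-- The cone-volume measure `V_K = (1/n) h_K S_K`. -/
def coneVolumeMeasure (n : ℕ) (K : Set (Euc n)) : Measure (Euc n) :=
  (n : ℝ≥0∞)⁻¹ • (surfaceMeasure n K).withDensity fun θ => ENNReal.ofReal (suppFn K θ)

/-- The polar body `K* = {x : ⟨x,y⟩ ≤ 1 ∀ y ∈ K}`. -/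
def polarBody {n : ℕ} (K : Set (Euc n)) : Set (Euc n) := {x | ∀ y ∈ K, ⟪x, y⟫ ≤ 1}

/-- The `0`-homogeneous extension to `ℝⁿ \ {0}` of a function on the unit sphere. -/
def zeroHomExt {n : ℕ} (f : Euc n → ℝ) (x : Euc n) : ℝ := f (‖x‖⁻¹ • x)

/-- The spherical gradient `∇̄ f` of a function on the unit sphere (the Euclidean gradient of
its `0`-homogeneous extension). -/
def sphGrad {n : ℕ} (f : Euc n → ℝ) (θ : Euc n) : Euc n := gradient (zeroHomExt f) θ

/-- Orthogonal projection onto the tangent space `θ^⊥` of the unit sphere at `θ`. -/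
def tanProj {n : ℕ} (θ : Euc n) : Euc n →L[ℝ] Euc n :=
  ContinuousLinearMap.id ℝ (Euc n) - (innerSL ℝ θ).smulRight θ

/-- For a `1`-homogeneous `g : ℝⁿ → ℝ` (e.g. `g = h_K`), the endomorphism of `ℝⁿ` acting as the
Hessian `D²g(θ)` (`= ∇̄²g + g δ̄` on `θ^⊥`) on the tangent space of the sphere at `θ`, and as the
identity in the radial direction. -/
def hessEnd {n : ℕ} (g : Euc n → ℝ) (θ : Euc n) : Module.End ℝ (Euc n) :=
  (((fderiv ℝ (gradient g) θ).comp (tanProj θ)) + (innerSL ℝ θ).smulRight θ).toLinearMap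

/-- `|grad_{g_K} f|²_{g_K}(θ) = h_K(θ) ⟨(D̄²h_K)⁻¹ ∇̄f, ∇̄f⟩`, the squared norm of the gradient
of `f` with respect to the centro-affine metric `g_K = (∇̄²h_K + h_K δ̄)/h_K`. -/
def gradNormSqGK (n : ℕ) (K : Set (Euc n)) (f : Euc n → ℝ) (θ : Euc n) : ℝ :=
  suppFn K θ * ⟪Ring.inverse (hessEnd (suppFn K) θ) (sphGrad f θ), sphGrad f θ⟫

/-- The first non-zero even eigenvalue `λ_{1,e}(-Δ_K)` of the Hilbert–Brunn–Minkowski operator: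
the infimum of the Rayleigh quotients `∫ |grad f|²_{g_K} dV_K / ∫ f² dV_K` over non-zero even
`C²` functions `f` on `S^{n-1}` with `∫ f dV_K = 0`. -/
def lambdaOneEven (n : ℕ) (K : Set (Euc n)) : ℝ :=
  sInf { r : ℝ | ∃ f : Euc n → ℝ, ContDiffOn ℝ 2 (zeroHomExt f) {(0 : Euc n)}ᶜ ∧
    (∀ x, f (-x) = f x) ∧
    (∫ θ, f θ ∂(coneVolumeMeasure n K)) = 0 ∧
    (∫ θ, (f θ) ^ 2 ∂(coneVolumeMeasure n K)) ≠ 0 ∧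
    r = (∫ θ, gradNormSqGK n K f θ ∂(coneVolumeMeasure n K)) /
        (∫ θ, (f θ) ^ 2 ∂(coneVolumeMeasure n K)) }

/-- The Hilbert–Brunn–Minkowski operator
`Δ_K f = ((D̄²h_K)⁻¹)^{ij} [∇̄²_{ij}(f h_K) + (f h_K) δ̄_{ij}] - (n-1) f`. -/
def hbmLaplacian (n : ℕ) (K : Set (Euc n)) (f : Euc n → ℝ) (θ : Euc n) : ℝ :=
  LinearMap.trace ℝ (Euc n)
    ((Ring.inverse (hessEnd (suppFn K) θ)) ∘ₗ
      ((fderiv ℝ (gradient (fun x => zeroHomExt f x * suppFn K x)) θ).comp (tanProj θ)).toLinearMap)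
    - ((n : ℝ) - 1) * f θ


/-- The curvature-pinching condition `a·δ ≤ D²(‖x‖_K²/2) ≤ b·δ` (as quadratic forms)
for all `x` in the unit sphere `S^{n-1}`. -/
def HessPinched (n : ℕ) (K : Set (Euc n)) (a b : ℝ) : Prop :=
  ∀ x ∈ sphere (0 : Euc n) 1, ∀ u : Euc n,
    a * ‖u‖ ^ 2 ≤ hess (halfGaugeSq K) x u u ∧ hess (halfGaugeSq K) x u u ≤ b * ‖u‖ ^ 2

/-- The projection `π_{∂K}(x) : T_x ℝⁿ → T_x ∂K` onto the tangent space of `∂K` at `x`,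
parallel to the radial direction `x`. -/
def radialTanProj {n : ℕ} (K : Set (Euc n)) (x u : Euc n) : Euc n :=
  u - (⟪gaussMap K x, u⟫ / ⟪gaussMap K x, x⟫) • x

open scoped Classical in
/-- The `C^{2,r}`-distance between two convex bodies: the `C²`-norm of the difference of their
support functions on the unit sphere, plus the `r`-Hölder seminorm of its second derivative. -/
def c2aDist (n : ℕ) (r : ℝ) (K L : Set (Euc n)) : ℝ :=
  (⨆ θ : sphere (0 : Euc n) 1, |suppFn K ↑θ - suppFn L ↑θ|) +
  (⨆ θ : sphere (0 : Euc n) 1, ‖fderiv ℝ (suppFn K) ↑θ - fderiv ℝ (suppFn L) ↑θ‖) +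
  (⨆ θ : sphere (0 : Euc n) 1,
    ‖fderiv ℝ (fun z => fderiv ℝ (suppFn K) z) ↑θ
      - fderiv ℝ (fun z => fderiv ℝ (suppFn L) z) ↑θ‖) +
  (⨆ q : sphere (0 : Euc n) 1 × sphere (0 : Euc n) 1,
    if (q.1 : Euc n) = q.2 then 0 else
      ‖(fderiv ℝ (fun z => fderiv ℝ (suppFn K) z) ↑q.1
          - fderiv ℝ (fun z => fderiv ℝ (suppFn L) z) ↑q.1)
        - (fderiv ℝ (fun z => fderiv ℝ (suppFn K) z) ↑q.2
          - fderiv ℝ (fun z => fderiv ℝ (suppFn L) z) ↑q.2)‖ / ‖(q.1 : Euc n) - ↑q.2‖ ^ r)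

/-- The family `F_γ` of origin-symmetric `C^{2,r}` convex bodies with strictly positive curvature
admitting, for some `ℓ ∈ GL(n,ℝ)`, a curvature-pinching `a·δ ≤ D²(‖x‖_{ℓK}²/2) ≤ b·δ` on the
unit sphere with ratio `b/a = γ`. -/
def pinchedFamily (n : ℕ) (r γ : ℝ) : Set (Set (Euc n)) :=
  {K | IsC2HolderBody n r K ∧ IsOriginSymmetric K ∧
    ∃ ℓ : Euc n ≃ₗ[ℝ] Euc n, ∃ a b : ℝ, 0 < a ∧ a ≤ b ∧ b / a = γ ∧
      HessPinched n (⇑ℓ '' K) a b}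


section PinchAux
variable {n : ℕ} {K : Set (Euc n)}

theorem aux_bdd (hcomp : IsCompact K) : Bornology.IsVonNBounded ℝ K :=
  (NormedSpace.isVonNBounded_iff ℝ).2 hcomp.isBounded

theorem aux_gauge_pos (hcomp : IsCompact K) (h0 : K ∈ nhds (0 : Euc n)) {x : Euc n}
    (hx : x ≠ 0) : 0 < gauge K x :=
  (gauge_pos (absorbent_nhds_zero h0) (aux_bdd hcomp)).2 hx

theorem aux_gauge_eq_sqrt :
    gauge K = fun y => Real.sqrt (2 * halfGaugeSq K y) := by
  funext y
  rw [halfGaugeSq]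
  rw [show 2 * (gauge K y ^ 2 / 2) = gauge K y ^ 2 by ring]
  rw [Real.sqrt_sq (gauge_nonneg y)]

theorem aux_contDiffAt_gauge (hcomp : IsCompact K) (h0 : K ∈ nhds (0 : Euc n))
    (hC2 : ContDiffOn ℝ 2 (halfGaugeSq K) {(0 : Euc n)}ᶜ) {x : Euc n} (hx : x ≠ 0) :
    ContDiffAt ℝ 2 (gauge K) x := by
  have hF : ContDiffAt ℝ 2 (halfGaugeSq K) x :=
    hC2.contDiffAt (isOpen_compl_singleton.mem_nhds hx)
  have hFx : 0 < halfGaugeSq K x := by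
    have := aux_gauge_pos hcomp h0 hx
    rw [halfGaugeSq]; positivity
  rw [aux_gauge_eq_sqrt]
  exact (Real.contDiffAt_sqrt (by positivity)).comp x (contDiffAt_const.mul hF)

theorem aux_F_smul {t : ℝ} (ht : 0 ≤ t) (y : Euc n) :
    halfGaugeSq K (t • y) = t ^ 2 * halfGaugeSq K y := by
  rw [halfGaugeSq, halfGaugeSq, gauge_smul_of_nonneg ht, smul_eq_mul]; ring

theorem aux_euler
    (hC2 : ContDiffOn ℝ 2 (halfGaugeSq K) {(0 : Euc n)}ᶜ) {x : Euc n} (hx : x ≠ 0) :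
    fderiv ℝ (halfGaugeSq K) x x = 2 * halfGaugeSq K x := by
  set F := halfGaugeSq K with hFdef
  have hF : ContDiffAt ℝ 2 F x := hC2.contDiffAt (isOpen_compl_singleton.mem_nhds hx)
  have hd : DifferentiableAt ℝ F x := hF.differentiableAt (by norm_num)
  have hcurve : HasDerivAt (fun t : ℝ => t • x) ((1 : ℝ) • x) 1 := (hasDerivAt_id 1).smul_const x
  have c1 : HasDerivAt (fun t : ℝ => F (t • x)) (fderiv ℝ F x x) 1 := by
    have := HasFDerivAt.comp_hasDerivAt_of_eq (x := (1:ℝ)) hd.hasFDerivAt hcurve (by simp)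
    simpa [Function.comp_def] using this
  have c2 : HasDerivAt (fun t : ℝ => F (t • x)) (2 * F x) 1 := by
    have heq : (fun t : ℝ => t ^ 2 * F x) =ᶠ[nhds (1 : ℝ)] (fun t : ℝ => F (t • x)) := by
      filter_upwards [eventually_gt_nhds (by norm_num : (0:ℝ) < 1)] with t ht
      exact (aux_F_smul ht.le x).symm
    have h2 : HasDerivAt (fun t : ℝ => t ^ 2 * F x) (2 * F x) 1 := by
      simpa using (hasDerivAt_pow 2 (1 : ℝ)).mul_const (F x)
    exact h2.congr_of_eventuallyEq heq.symm
  exact c1.unique c2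

theorem aux_fderiv_hom
    (hC2 : ContDiffOn ℝ 2 (halfGaugeSq K) {(0 : Euc n)}ᶜ) {x : Euc n} (hx : x ≠ 0)
    {t : ℝ} (ht : 0 < t) (u : Euc n) :
    fderiv ℝ (halfGaugeSq K) (t • x) u = t * fderiv ℝ (halfGaugeSq K) x u := by
  set F := halfGaugeSq K with hFdef
  have htx : t • x ≠ 0 := smul_ne_zero ht.ne' hx
  have hdtx : DifferentiableAt ℝ F (t • x) :=
    (hC2.contDiffAt (isOpen_compl_singleton.mem_nhds htx)).differentiableAt (by norm_num)
  have hdx : DifferentiableAt ℝ F x :=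
    (hC2.contDiffAt (isOpen_compl_singleton.mem_nhds hx)).differentiableAt (by norm_num)
  have hsm : HasFDerivAt (fun y : Euc n => t • y) (t • ContinuousLinearMap.id ℝ (Euc n)) x :=
    (hasFDerivAt_id x).const_smul t
  have A : HasFDerivAt (fun y => F (t • y))
      ((fderiv ℝ F (t • x)).comp (t • ContinuousLinearMap.id ℝ (Euc n))) x :=
    hdtx.hasFDerivAt.comp x hsm
  have B : HasFDerivAt (fun y => F (t • y)) ((t ^ 2) • fderiv ℝ F x) x := by
    have h1 : HasFDerivAt (fun y => t ^ 2 * F y) ((t ^ 2) • fderiv ℝ F x) x :=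
      hdx.hasFDerivAt.const_mul (t ^ 2)
    have h2 : (fun y : Euc n => F (t • y)) = fun y => t ^ 2 * F y :=
      funext fun y => aux_F_smul ht.le y
    rw [h2]; exact h1
  have hL := A.unique B
  have := congrArg (fun (L : Euc n →L[ℝ] ℝ) => L (t⁻¹ • u)) hL
  simp only [ContinuousLinearMap.coe_comp', Function.comp_apply,
    ContinuousLinearMap.smul_apply, ContinuousLinearMap.coe_id', id_eq,
    ContinuousLinearMap.coe_smul', Pi.smul_apply, smul_inv_smul₀ ht.ne'] at this
  rw [this, (fderiv ℝ F x).map_smul]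
  simp only [smul_eq_mul]
  field_simp

theorem aux_hess_radial
    (hC2 : ContDiffOn ℝ 2 (halfGaugeSq K) {(0 : Euc n)}ᶜ) {x : Euc n} (hx : x ≠ 0) :
    fderiv ℝ (fun y => fderiv ℝ (halfGaugeSq K) y x) x x = 2 * halfGaugeSq K x := by
  set F := halfGaugeSq K with hFdef
  have hF : ContDiffAt ℝ 2 F x := hC2.contDiffAt (isOpen_compl_singleton.mem_nhds hx)
  have hfd : ContDiffAt ℝ 1 (fderiv ℝ F) x := hF.fderiv_right (by norm_num)
  have hΦd : DifferentiableAt ℝ (fun y => fderiv ℝ F y x) x :=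
    (ContinuousLinearMap.apply ℝ ℝ x).differentiableAt.comp x (hfd.differentiableAt one_ne_zero)
  have c1 : HasDerivAt (fun t : ℝ => fderiv ℝ F (t • x) x)
      (fderiv ℝ (fun y => fderiv ℝ F y x) x x) 1 := by
    have := HasFDerivAt.comp_hasDerivAt_of_eq (x := (1:ℝ)) hΦd.hasFDerivAt
      ((hasDerivAt_id 1).smul_const x) (by simp)
    simpa [Function.comp_def] using this
  have c2 : HasDerivAt (fun t : ℝ => fderiv ℝ F (t • x) x) (fderiv ℝ F x x) 1 := by
    have heq : (fun t : ℝ => t * fderiv ℝ F x x) =ᶠ[nhds (1 : ℝ)]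
        (fun t : ℝ => fderiv ℝ F (t • x) x) := by
      filter_upwards [eventually_gt_nhds (by norm_num : (0:ℝ) < 1)] with t ht
      exact (aux_fderiv_hom hC2 hx ht x).symm
    have h2 : HasDerivAt (fun t : ℝ => t * fderiv ℝ F x x) (fderiv ℝ F x x) 1 := by
      simpa using (hasDerivAt_id (1 : ℝ)).mul_const (fderiv ℝ F x x)
    exact h2.congr_of_eventuallyEq heq.symm
  rw [c1.unique c2]
  exact aux_euler hC2 hx

end PinchAux

/-- **Lemma 1.1 (consequences of pinching on `∂K`)**: if `K ∈ 𝒦²₊` and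
`α δ ≤ D²(‖x‖_K²/2) ≤ β δ` for all `x ∈ ∂K` with `0 < α ≤ β`, then
`(1/√β) B₂ⁿ ⊆ K ⊆ (1/√α) B₂ⁿ` and
`α δ_{∂K} ≤ II_{∂K}(x)/⟨x,ν_K(x)⟩ ≤ β δ_{∂K}` for all `x ∈ ∂K`
(as quadratic forms on the tangent space `T_x ∂K = ν_K(x)^⊥`). -/
theorem pinching_ball_inclusions_and_secondFF_pinching
    (n : ℕ) (K : Set (Euc n)) (hK : IsC2PlusBody n K) (a b : ℝ) (ha : 0 < a) (hab : a ≤ b)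
    (hpinch : ∀ x ∈ frontier K, ∀ u : Euc n,
      a * ‖u‖ ^ 2 ≤ hess (halfGaugeSq K) x u u ∧ hess (halfGaugeSq K) x u u ≤ b * ‖u‖ ^ 2) :
    (closedBall (0 : Euc n) (Real.sqrt b)⁻¹ ⊆ K ∧ K ⊆ closedBall (0 : Euc n) (Real.sqrt a)⁻¹) ∧
    ∀ x ∈ frontier K, ∀ u : Euc n, ⟪gaussMap K x, u⟫ = 0 →
      a * ‖u‖ ^ 2 ≤ secondFF K x u u / ⟪x, gaussMap K x⟫ ∧
      secondFF K x u u / ⟪x, gaussMap K x⟫ ≤ b * ‖u‖ ^ 2 := by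
  obtain ⟨⟨hKcomp, hKconv, hK0⟩, hC2, _hcurv⟩ := hK
  have hKnhds : K ∈ nhds (0 : Euc n) := mem_interior_iff_mem_nhds.1 hK0
  have habs : Absorbent ℝ K := absorbent_nhds_zero hKnhds
  have hbdd : Bornology.IsVonNBounded ℝ K := aux_bdd hKcomp
  have hgpos : ∀ y : Euc n, y ≠ 0 → 0 < gauge K y := fun y hy =>
    (gauge_pos habs hbdd).2 hy
  have hfr1 : ∀ x ∈ frontier K, gauge K x = 1 := fun x hx =>
    (gauge_eq_one_iff_mem_frontier hKconv hKnhds).2 hx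
  have hfrne : ∀ x ∈ frontier K, x ≠ 0 := by
    intro x hx h0
    rw [h0] at hx
    exact hx.2 hK0
  have sa : 0 < Real.sqrt a := Real.sqrt_pos.2 ha
  have sb : 0 < Real.sqrt b := Real.sqrt_pos.2 (lt_of_lt_of_le ha hab)
  have sa2 : Real.sqrt a ^ 2 = a := Real.sq_sqrt ha.le
  have sb2 : Real.sqrt b ^ 2 = b := Real.sq_sqrt (le_trans ha.le hab)
  have hnormfr : ∀ x ∈ frontier K, (Real.sqrt b)⁻¹ ≤ ‖x‖ ∧ ‖x‖ ≤ (Real.sqrt a)⁻¹ := by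
    intro x hx
    have hxne := hfrne x hx
    have hhess : hess (halfGaugeSq K) x x x = 1 := by
      show fderiv ℝ (fun y => fderiv ℝ (halfGaugeSq K) y x) x x = 1
      rw [aux_hess_radial hC2 hxne, halfGaugeSq, hfr1 x hx]
      norm_num
    obtain ⟨h1, h2⟩ := hpinch x hx x
    rw [hhess] at h1 h2
    constructor
    · have h3 : ((Real.sqrt b)⁻¹) ^ 2 ≤ ‖x‖ ^ 2 := by
        rw [inv_pow, sb2]
        rw [inv_le_iff_one_le_mul₀ (lt_of_lt_of_le ha hab)]
        linarith
      exact (pow_le_pow_iff_left₀ (by positivity) (norm_nonneg x) two_ne_zero).1 h3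
    · have h3 : ‖x‖ ^ 2 ≤ ((Real.sqrt a)⁻¹) ^ 2 := by
        rw [inv_pow, sa2]
        calc ‖x‖ ^ 2 = a⁻¹ * (a * ‖x‖ ^ 2) := by field_simp
          _ ≤ a⁻¹ * 1 := mul_le_mul_of_nonneg_left h1 (by positivity)
          _ = a⁻¹ := mul_one _
      exact (pow_le_pow_iff_left₀ (norm_nonneg x) (by positivity) two_ne_zero).1 h3
  have hgauge : ∀ y : Euc n,
      gauge K y ≤ Real.sqrt b * ‖y‖ ∧ Real.sqrt a * ‖y‖ ≤ gauge K y := by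
    intro y
    rcases eq_or_ne y 0 with rfl | hy
    · simp [gauge_zero]
    · have hgy := hgpos y hy
      have hgz : gauge K ((gauge K y)⁻¹ • y) = 1 := by
        rw [gauge_smul_of_nonneg (inv_nonneg.2 hgy.le), smul_eq_mul,
          inv_mul_cancel₀ hgy.ne']
      have hzfr : (gauge K y)⁻¹ • y ∈ frontier K :=
        (gauge_eq_one_iff_mem_frontier hKconv hKnhds).1 hgz
      have hnz : ‖(gauge K y)⁻¹ • y‖ = (gauge K y)⁻¹ * ‖y‖ := by
        rw [norm_smul, Real.norm_eq_abs, abs_of_pos (inv_pos.2 hgy)]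
      obtain ⟨l, r⟩ := hnormfr _ hzfr
      rw [hnz] at l r
      constructor
      · rw [inv_mul_eq_div, inv_eq_one_div, div_le_div_iff₀ sb hgy] at l
        nlinarith
      · rw [inv_mul_eq_div, inv_eq_one_div, div_le_div_iff₀ hgy sa] at r
        nlinarith
  refine ⟨⟨?_, ?_⟩, ?_⟩
  · intro y hy
    rw [mem_closedBall_zero_iff] at hy
    have h1 : gauge K y ≤ 1 := by
      calc gauge K y ≤ Real.sqrt b * ‖y‖ := (hgauge y).1
        _ ≤ Real.sqrt b * (Real.sqrt b)⁻¹ := by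
            exact mul_le_mul_of_nonneg_left hy sb.le
        _ = 1 := mul_inv_cancel₀ sb.ne'
    have := (gauge_le_one_iff_mem_closure hKconv hKnhds).1 h1
    rwa [hKcomp.isClosed.closure_eq] at this
  · intro y hy
    rw [mem_closedBall_zero_iff]
    have h1 : gauge K y ≤ 1 := gauge_le_one_of_mem hy
    have h2 := (hgauge y).2
    rw [← one_div, le_div_iff₀ sa]
    linarith
  · intro x hx u hu
    have hxne := hfrne x hx
    have hgx : gauge K x = 1 := hfr1 x hx
    have hCg : ContDiffAt ℝ 2 (gauge K) x := aux_contDiffAt_gauge hKcomp hKnhds hC2 hxne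
    have hdg : DifferentiableAt ℝ (gauge K) x := hCg.differentiableAt (by norm_num)
    have hgradinner : ∀ (f : Euc n → ℝ) (y v : Euc n), ⟪gradient f y, v⟫ = fderiv ℝ f y v :=
      fun f y v => InnerProductSpace.toDual_symm_apply
    have hFg : ∀ y : Euc n, y ≠ 0 →
        fderiv ℝ (halfGaugeSq K) y = gauge K y • fderiv ℝ (gauge K) y := by
      intro y hy
      have hdgy : DifferentiableAt ℝ (gauge K) y :=
        (aux_contDiffAt_gauge hKcomp hKnhds hC2 hy).differentiableAt (by norm_num)
      have h1 : HasDerivAt (fun s : ℝ => s ^ 2 / 2) (gauge K y) (gauge K y) := by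
        have := (hasDerivAt_pow 2 (gauge K y)).div_const 2
        simpa using this
      have h2 := HasDerivAt.comp_hasFDerivAt y h1 hdgy.hasFDerivAt
      exact h2.fderiv
    have hfgx : fderiv ℝ (gauge K) x x = 1 := by
      have he := aux_euler hC2 hxne
      rw [hFg x hxne] at he
      simp only [ContinuousLinearMap.smul_apply, smul_eq_mul, hgx, one_mul] at he
      rw [he, halfGaugeSq, hgx]
      norm_num
    have hGx : ⟪gradient (gauge K) x, x⟫ = 1 := by rw [hgradinner]; exact hfgx
    have hGne : gradient (gauge K) x ≠ 0 := by
      intro h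
      rw [h, inner_zero_left] at hGx
      norm_num at hGx
    have hGpos : (0:ℝ) < ‖gradient (gauge K) x‖ := norm_pos_iff.2 hGne
    have htang : ⟪gradient (gauge K) x, u⟫ = 0 := by
      have h1 : ⟪gaussMap K x, u⟫ =
          ‖gradient (gauge K) x‖⁻¹ * ⟪gradient (gauge K) x, u⟫ := by
        rw [gaussMap, real_inner_smul_left]
      rw [h1] at hu
      rcases mul_eq_zero.1 hu with h | h
      · exact absurd h (by positivity)
      · exact h
    have hxg : ⟪x, gaussMap K x⟫ = ‖gradient (gauge K) x‖⁻¹ := by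
      rw [gaussMap, real_inner_smul_right, real_inner_comm, hGx, mul_one]
    have hfd1 : ContDiffAt ℝ 1 (fderiv ℝ (gauge K)) x := hCg.fderiv_right (by norm_num)
    have hdfd : DifferentiableAt ℝ (fderiv ℝ (gauge K)) x := hfd1.differentiableAt one_ne_zero
    set T : StrongDual ℝ (Euc n) →L[ℝ] Euc n :=
      { toFun := fun w => (InnerProductSpace.toDual ℝ (Euc n)).symm w
        map_add' := fun w₁ w₂ => by simp
        map_smul' := fun c w => by simp
        cont := (InnerProductSpace.toDual ℝ (Euc n)).symm.continuous } with hT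
    have hGdef : gradient (gauge K) = fun y => T (fderiv ℝ (gauge K) y) := rfl
    have hTinner : ∀ (w : StrongDual ℝ (Euc n)) (v : Euc n), ⟪T w, v⟫ = w v :=
      fun w v => InnerProductSpace.toDual_symm_apply
    have hGdiff : DifferentiableAt ℝ (gradient (gauge K)) x := by
      rw [hGdef]
      exact T.differentiableAt.comp x hdfd
    have hGfderiv : fderiv ℝ (gradient (gauge K)) x =
        T.comp (fderiv ℝ (fderiv ℝ (gauge K)) x) := by
      rw [hGdef]
      exact (T.hasFDerivAt.comp x hdfd.hasFDerivAt).fderiv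
    have hGu : ⟪fderiv ℝ (gradient (gauge K)) x u, u⟫ =
        (fderiv ℝ (fderiv ℝ (gauge K)) x u) u := by
      rw [hGfderiv, ContinuousLinearMap.comp_apply, hTinner]
    have hΨ : HasFDerivAt (fun y => fderiv ℝ (gauge K) y u)
        ((ContinuousLinearMap.apply ℝ ℝ u).comp (fderiv ℝ (fderiv ℝ (gauge K)) x)) x :=
      (ContinuousLinearMap.apply ℝ ℝ u).hasFDerivAt.comp x hdfd.hasFDerivAt
    have hfgxu : fderiv ℝ (gauge K) x u = 0 := by
      rw [← hgradinner]; exact htang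
    -- the tangential Hessian identity
    have hFhesseq : hess (halfGaugeSq K) x u u =
        (fderiv ℝ (fderiv ℝ (gauge K)) x u) u := by
      show fderiv ℝ (fun y => fderiv ℝ (halfGaugeSq K) y u) x u = _
      have heq : (fun y => fderiv ℝ (halfGaugeSq K) y u) =ᶠ[nhds x]
          (fun y => gauge K y * fderiv ℝ (gauge K) y u) := by
        filter_upwards [isOpen_compl_singleton.mem_nhds hxne] with y hy
        rw [hFg y hy]
        simp [smul_eq_mul]
      rw [heq.fderiv_eq]
      have hprod : HasFDerivAt (fun y => gauge K y * fderiv ℝ (gauge K) y u) _ x :=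
        hdg.hasFDerivAt.mul hΨ
      rw [hprod.fderiv]
      simp only [ContinuousLinearMap.add_apply, ContinuousLinearMap.smul_apply,
        ContinuousLinearMap.comp_apply, ContinuousLinearMap.apply_apply,
        smul_eq_mul, hgx, one_mul, hfgxu, zero_mul, mul_zero, add_zero]
    -- the second fundamental form identity
    have hcdiff : DifferentiableAt ℝ (fun y => ‖gradient (gauge K) y‖⁻¹) x :=
      ((hGdiff.norm ℝ hGne).inv hGpos.ne')
    have hν : HasFDerivAt (gaussMap K)
        ((‖gradient (gauge K) x‖⁻¹) • fderiv ℝ (gradient (gauge K)) x +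
          (fderiv ℝ (fun y => ‖gradient (gauge K) y‖⁻¹) x).smulRight
            (gradient (gauge K) x)) x := by
      have := hcdiff.hasFDerivAt.smul hGdiff.hasFDerivAt
      exact this
    have hsec : secondFF K x u u =
        ‖gradient (gauge K) x‖⁻¹ * ((fderiv ℝ (fderiv ℝ (gauge K)) x u) u) := by
      show ⟪fderiv ℝ (gaussMap K) x u, u⟫ = _
      rw [hν.fderiv]
      rw [ContinuousLinearMap.add_apply, ContinuousLinearMap.smul_apply,
        ContinuousLinearMap.smulRight_apply, inner_add_left, real_inner_smul_left,
        real_inner_smul_left, htang, hGu]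
      ring
    obtain ⟨p1, p2⟩ := hpinch x hx u
    rw [hFhesseq] at p1 p2
    rw [hsec, hxg, mul_div_cancel_left₀ _ (by positivity : (0:ℝ) < ‖gradient (gauge K) x‖⁻¹).ne']
    exact ⟨p1, p2⟩

end
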